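/- For the uniform stamp distribution p_B(b) = 1/m on {1,...,m} and per-frame success probability ξ = p_a(1-P_l) ∈ (0,1), the stationary distribution π_ω = ξ(1-ξ)^{⌊ω/m⌋}/m of the IRSA age offset chain satisfies Σ_{ω=0}^∞ π_ω = 1 and the corresponding average AoI equals Δ = 1 + 3m/2 + m(1-ξ)/ξ + (m-1)/2. -/

import Mathlib

/-- For uniform stamp distribution p_B = 1/m, the IRSA stationary distribution
π_ω = ξ(1-ξ)^{⌊ω/m⌋}/m sums to 1 and gives average AoI Δ = 1 + 3m/2 + m(1-ξ)/ξ + (m-1)/2. -/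
theorem irsa_uniform_stamp (m : ℕ) (hm : 1 ≤ m) (ξ : ℝ) (hξ0 : 0 < ξ) (hξ1 : ξ < 1)
    (π : ℕ → ℝ) (hπ : ∀ ω, π ω = ξ * (1 - ξ) ^ (ω / m) / (m : ℝ)) :
    (∑' ω : ℕ, π ω) = 1 ∧
    1 + 3 * (m : ℝ) / 2 + ∑' ω : ℕ, (ω : ℝ) * π ω
      = 1 + 3 * (m : ℝ) / 2 + (m : ℝ) * (1 - ξ) / ξ + ((m : ℝ) - 1) / 2 := by
  haveI : NeZero m := ⟨by omega⟩
  have hm0 : (0:ℝ) < m := by exact_mod_cast Nat.lt_of_lt_of_le Nat.zero_lt_one hm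
  set x : ℝ := 1 - ξ with hxdef
  have hx0 : 0 ≤ x := by simp [hxdef]; linarith
  have hx1 : x < 1 := by simp [hxdef]; linarith
  have hxnorm : ‖x‖ < 1 := by rwa [Real.norm_eq_abs, abs_of_nonneg hx0]
  have hgeo : Summable (fun k : ℕ => x ^ k) := summable_geometric_of_lt_one hx0 hx1
  have hkgeo : Summable (fun k : ℕ => (k:ℝ) * x ^ k) := by
    simpa using summable_pow_mul_geometric_of_norm_lt_one 1 hxnorm
  have hinv : ∀ p : ℕ × Fin m, (((Nat.divModEquiv m).symm p : ℕ) / m) = p.1 := by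
    intro p
    rw [Nat.divModEquiv_symm_apply, mul_comm,
      Nat.mul_add_div (Nat.lt_of_lt_of_le Nat.zero_lt_one hm),
      Nat.div_eq_of_lt p.2.is_lt, Nat.add_zero]
  -- First tsum
  have h1 : (∑' ω : ℕ, π ω) = 1 := by
    have heq : ∀ p : ℕ × Fin m, π ((Nat.divModEquiv m).symm p) = ξ * x ^ p.1 / m := by
      intro p; rw [hπ, hinv]
    have hsum : Summable fun p : ℕ × Fin m => π ((Nat.divModEquiv m).symm p) :=
      (Summable.mul_of_nonneg (g := fun _ : Fin m => (1:ℝ))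
        ((hgeo.mul_left ξ).div_const m)
        (summable_of_finite_support (Set.toFinite _))
        (fun k => by positivity) (fun _ => zero_le_one)).congr
        (fun p => by rw [heq p]; ring)
    calc (∑' ω : ℕ, π ω) = ∑' p : ℕ × Fin m, π ((Nat.divModEquiv m).symm p) := ((Nat.divModEquiv m).symm.tsum_eq π).symm
      _ = ∑' (k : ℕ) (r : Fin m), π ((Nat.divModEquiv m).symm (k, r)) := Summable.tsum_prod hsum
      _ = ∑' k : ℕ, (m : ℝ) * (ξ * x ^ k / m) := by
          congr 1; funext k
          rw [tsum_fintype]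
          rw [Finset.sum_congr rfl (fun r _ => heq (k, r))]
          simp [mul_comm]
      _ = ∑' k : ℕ, ξ * x ^ k := by
          congr 1; funext k; field_simp
      _ = ξ * (1 - x)⁻¹ := by rw [tsum_mul_left, tsum_geometric_of_lt_one hx0 hx1]
      _ = 1 := by
          rw [show (1 : ℝ) - x = ξ from by simp [hxdef]]
          field_simp
  refine ⟨h1, ?_⟩
  -- Second tsum
  have heq2 : ∀ p : ℕ × Fin m, (((Nat.divModEquiv m).symm p : ℕ) : ℝ) * π ((Nat.divModEquiv m).symm p)
      = (p.1 : ℝ) * (ξ * x ^ p.1) + ((p.2 : ℕ) : ℝ) * (ξ * x ^ p.1 / m) := by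
    intro p
    rw [hπ, hinv, Nat.divModEquiv_symm_apply]
    push_cast
    field_simp
  have hs1 : Summable fun p : ℕ × Fin m => (p.1 : ℝ) * (ξ * x ^ p.1) := by
    have : Summable fun k : ℕ => (k : ℝ) * (ξ * x ^ k) := by
      simpa [mul_assoc, mul_comm, mul_left_comm] using hkgeo.mul_left ξ
    exact Summable.mul_of_nonneg this (summable_of_finite_support (Set.toFinite _))
      (fun k => by positivity) (fun _ => zero_le_one)
      |>.congr (fun p => by ring)
  have hs2 : Summable fun p : ℕ × Fin m => ((p.2 : ℕ) : ℝ) * (ξ * x ^ p.1 / m) := by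
    have hc : Summable fun k : ℕ => ξ * x ^ k / m := (hgeo.mul_left ξ).div_const m
    exact Summable.mul_of_nonneg hc (summable_of_finite_support (Set.toFinite _)
      (f := fun r : Fin m => ((r : ℕ) : ℝ)))
      (fun k => by positivity) (fun r => by positivity)
      |>.congr (fun p => by ring)
  have hsum2 : Summable fun p : ℕ × Fin m => (((Nat.divModEquiv m).symm p : ℕ) : ℝ) * π ((Nat.divModEquiv m).symm p) := by
    exact (hs1.add hs2).congr (fun p => (heq2 p).symm)
  have hfin : (∑ r : Fin m, ((r : ℕ) : ℝ)) = (m : ℝ) * ((m : ℝ) - 1) / 2 := by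
    have h2 : (∑ i ∈ Finset.range m, i) * 2 = m * (m - 1) := Finset.sum_range_id_mul_two m
    have h3 : (∑ r : Fin m, ((r : ℕ) : ℝ)) = ((∑ i ∈ Finset.range m, i : ℕ) : ℝ) := by
      rw [← Fin.sum_univ_eq_sum_range]; push_cast; rfl
    have h4 := congrArg (fun n : ℕ => (n : ℝ)) h2
    push_cast [Nat.cast_sub hm] at h4
    push_cast at h3
    rw [h3]; linarith
  have key : (∑' ω : ℕ, (ω : ℝ) * π ω) = (m : ℝ) * x / ξ + ((m : ℝ) - 1) / 2 := by
    calc (∑' ω : ℕ, (ω : ℝ) * π ω)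
        = ∑' p : ℕ × Fin m, (((Nat.divModEquiv m).symm p : ℕ) : ℝ) * π ((Nat.divModEquiv m).symm p) :=
          ((Nat.divModEquiv m).symm.tsum_eq (fun ω => (ω : ℝ) * π ω)).symm
      _ = ∑' (k : ℕ) (r : Fin m), ((((Nat.divModEquiv m).symm (k, r) : ℕ)) : ℝ) * π ((Nat.divModEquiv m).symm (k, r)) :=
          Summable.tsum_prod hsum2
      _ = ∑' k : ℕ, ((m : ℝ) * ((k : ℝ) * (ξ * x ^ k))
            + ((m : ℝ) * ((m : ℝ) - 1) / 2) * (ξ * x ^ k / m)) := by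
          congr 1; funext k
          rw [tsum_fintype]
          calc (∑ r : Fin m, ((((Nat.divModEquiv m).symm (k, r) : ℕ)) : ℝ) * π ((Nat.divModEquiv m).symm (k, r)))
              = ∑ r : Fin m, ((k : ℝ) * (ξ * x ^ k) + ((r : ℕ) : ℝ) * (ξ * x ^ k / m)) := by
                refine Finset.sum_congr rfl fun r _ => heq2 (k, r)
            _ = _ := by
                rw [Finset.sum_add_distrib, Finset.sum_const, ← Finset.sum_mul, hfin]
                simp [mul_comm]
      _ = (∑' k : ℕ, (m : ℝ) * ((k : ℝ) * (ξ * x ^ k)))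
            + ∑' k : ℕ, ((m : ℝ) * ((m : ℝ) - 1) / 2) * (ξ * x ^ k / m) := by
          refine Summable.tsum_add ?_ ?_
          · exact ((hkgeo.mul_left ξ).congr (fun k => by ring)).mul_left _
          · exact ((hgeo.mul_left ξ).div_const m).mul_left _
      _ = (m : ℝ) * x / ξ + ((m : ℝ) - 1) / 2 := by
          rw [tsum_mul_left, tsum_mul_left]
          have ht1 : (∑' k : ℕ, (k : ℝ) * (ξ * x ^ k)) = ξ * (x / (1 - x) ^ 2) := by
            rw [show (fun k : ℕ => (k : ℝ) * (ξ * x ^ k))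
                = fun k : ℕ => ξ * ((k : ℝ) * x ^ k) from by funext k; ring]
            rw [tsum_mul_left, tsum_coe_mul_geometric_of_norm_lt_one hxnorm]
          have ht2 : (∑' k : ℕ, ξ * x ^ k / m) = (1 : ℝ) / m := by
            rw [show (fun k : ℕ => ξ * x ^ k / m) = fun k : ℕ => (ξ / m) * x ^ k from by
              funext k; ring]
            rw [tsum_mul_left, tsum_geometric_of_lt_one hx0 hx1,
              show (1 : ℝ) - x = ξ from by simp [hxdef]]
            field_simp
          rw [ht1, ht2, show (1 : ℝ) - x = ξ from by simp [hxdef]]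
          field_simp
  rw [key]
  have : (m : ℝ) * x / ξ = (m : ℝ) * (1 - ξ) / ξ := by rw [hxdef]
  rw [this]; ring
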